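/- Let 𝔛 be the affine fan induced by a strongly convex rational polyhedral cone τ, and let (𝔛, !𝔅, *ℭ, !*ℌ) be a fan quadruple with a ray ν ∈ ℭ such that there exists a sorting function ρ on τ with ρ < 0 on ν ∖ {0}. Let 𝔛' = 𝔛*(ν) be the star subdivision at ν (an efficient subdivision), with induced quadruple (𝔛', !𝔅, *ℭ, !*ℌ). Then this induced quadruple makes 𝔛' a convex subdivision of 𝔛. -/

import Mathlib

namespace ToricPaper

open scoped BigOperators

/-- The ambient space `N_ℚ = ℚ^n`. -/
abbrev V (n : ℕ) := Fin n → ℚ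

variable {n : ℕ}

/-- The cone of nonnegative rational combinations of elements of `A`. -/
def coneHull (A : Set (V n)) : Set (V n) :=
  {x | ∃ t : Finset (V n), ↑t ⊆ A ∧ ∃ c : V n → ℚ,
    (∀ v ∈ t, 0 ≤ c v) ∧ x = ∑ v ∈ t, c v • v}

/-- A rational polyhedral cone: the cone generated by finitely many vectors. -/
def IsPolyCone (σ : Set (V n)) : Prop := ∃ S : Finset (V n), σ = coneHull (S : Set (V n))

/-- A cone is strongly convex if it contains no line. -/
def StronglyConvex (σ : Set (V n)) : Prop := ∀ x ∈ σ, -x ∈ σ → x = 0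

/-- `F` is a face of `σ`, cut out by a linear functional nonnegative on `σ`. -/
def IsFaceOf (F σ : Set (V n)) : Prop :=
  ∃ m : (V n) →ₗ[ℚ] ℚ, (∀ x ∈ σ, 0 ≤ m x) ∧ F = {x ∈ σ | m x = 0}

/-- Dimension of a cone: the rank of its linear span. -/
noncomputable def coneDim (σ : Set (V n)) : ℕ := Module.finrank ℚ (Submodule.span ℚ σ)

/-- A ray of a cone is a one-dimensional face. -/
def IsRayOf (ν σ : Set (V n)) : Prop := IsFaceOf ν σ ∧ coneDim ν = 1

/-- An abstract ray: a one-dimensional strongly convex rational polyhedral cone. -/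
def IsRay (ν : Set (V n)) : Prop := IsPolyCone ν ∧ StronglyConvex ν ∧ coneDim ν = 1

/-- All faces of a cone `τ` (the affine fan induced by `τ`). -/
def faces (τ : Set (V n)) : Set (Set (V n)) := {F | IsFaceOf F τ}

/-- The rays of a cone `τ`. -/
def raysOf (τ : Set (V n)) : Set (Set (V n)) := {ν | IsRayOf ν τ}

/-- A fan: a finite collection of strongly convex rational polyhedral cones, closed under
taking faces, such that the intersection of two cones is a face of each. -/
def IsFan (X : Set (Set (V n))) : Prop :=
  X.Finite ∧ (∀ σ ∈ X, IsPolyCone σ ∧ StronglyConvex σ) ∧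
  (∀ σ ∈ X, ∀ F, IsFaceOf F σ → F ∈ X) ∧
  (∀ σ ∈ X, ∀ σ' ∈ X, IsFaceOf (σ ∩ σ') σ ∧ IsFaceOf (σ ∩ σ') σ')

/-- The rays (one-dimensional cones) belonging to a collection of cones. -/
def raysIn (X : Set (Set (V n))) : Set (Set (V n)) := {ν | ν ∈ X ∧ coneDim ν = 1}

/-- The support of a collection of cones. -/
def support (X : Set (Set (V n))) : Set (V n) := ⋃₀ X

/-- The data of a fan quadruple `(X, !B, *C, !*H)`: three pairwise disjoint sets of rays. -/
def IsQuadData (X B C H : Set (Set (V n))) : Prop :=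
  B ⊆ raysIn X ∧ C ⊆ raysIn X ∧ H ⊆ raysIn X ∧ Disjoint B C ∧ Disjoint B H ∧ Disjoint C H

/-- The data of a fan triple `(X, !B, *C)`: two disjoint sets of rays. -/
def IsTripleData (X B C : Set (Set (V n))) : Prop :=
  B ⊆ raysIn X ∧ C ⊆ raysIn X ∧ Disjoint B C

/-- `ρ` is a sorting function for the (restricted) quadruple on the faces of `ξ`:
nonnegative on rays of `ξ` in `B`, nonpositive on rays of `ξ` in `C`, zero on rays of `ξ`
in none of `B`, `C`, `H`. -/
def IsSortingOn (ξ : Set (V n)) (B C H : Set (Set (V n))) (ρ : (V n) →ₗ[ℚ] ℚ) : Prop :=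
  (∀ ν, IsRayOf ν ξ → ν ∈ B → ∀ x ∈ ν, 0 ≤ ρ x) ∧
  (∀ ν, IsRayOf ν ξ → ν ∈ C → ∀ x ∈ ν, ρ x ≤ 0) ∧
  (∀ ν, IsRayOf ν ξ → ν ∉ B → ν ∉ C → ν ∉ H → ∀ x ∈ ν, ρ x = 0)

/-- The (restricted) affine quadruple on the faces of `ξ` admits a `Cf`-strict sorting
function: a sorting function which is moreover negative on `ν ∖ {0}` for every `ν ∈ Cf`. -/
def HasStrictSortingOn (ξ : Set (V n)) (B C H Cf : Set (Set (V n))) : Prop :=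
  ∃ ρ : (V n) →ₗ[ℚ] ℚ, IsSortingOn ξ B C H ρ ∧
    ∀ ν, IsRayOf ν ξ → ν ∈ Cf → ∀ x ∈ ν, x ≠ 0 → ρ x < 0

/-- A cone `ξ` is `E`-unsettled if no ray of `ξ` lies in `E`. -/
def Unsettled (E : Set (Set (V n))) (ξ : Set (V n)) : Prop := ∀ ν, IsRayOf ν ξ → ν ∉ E

/-- The quadruple `(X, !B, *C, !*H)` is `(Bs, Cf, Hs)`-sorted. -/
def SortedOn (X B C H Bs Cf Hs : Set (Set (V n))) : Prop :=
  ∀ ξ ∈ X, Unsettled ((B \ Bs) ∪ (H \ Hs)) ξ → HasStrictSortingOn ξ B C H Cf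

/-- Partially-sorted: `(∅, C, ∅)`-sorted. -/
def PartiallySortedOn (X B C H : Set (Set (V n))) : Prop := SortedOn X B C H ∅ C ∅

/-- Well-sorted: `(B, C, H)`-sorted. -/
def WellSortedOn (X B C H : Set (Set (V n))) : Prop := SortedOn X B C H B C H

/-- A simplicial cone is generated by linearly independent vectors. -/
def IsSimplicialCone (σ : Set (V n)) : Prop :=
  ∃ S : Finset (V n), LinearIndependent ℚ (fun v : S => (v : V n)) ∧
    σ = coneHull (S : Set (V n))

/-- A collection of cones is `E`-simplicial: every cone having a ray of `E` as a face is the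
join of that ray with a cone of the collection of one less dimension. -/
def ESimplicialOn (X E : Set (Set (V n))) : Prop :=
  ∀ ν ∈ E, ∀ σ ∈ X, IsFaceOf ν σ →
    ∃ ζ ∈ X, σ = coneHull (ζ ∪ ν) ∧ coneDim σ = coneDim ζ + 1

/-- A subdivision of a fan: a fan with the same support, every cone of which is contained in
a cone of the base. -/
def IsSubdivision (X' X : Set (Set (V n))) : Prop :=
  IsFan X' ∧ support X' = support X ∧ ∀ σ' ∈ X', ∃ σ ∈ X, σ' ⊆ σ

/-- A subdivision is efficient if it introduces no new rays. -/
def IsEfficient (X' X : Set (Set (V n))) : Prop := raysIn X' = raysIn X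

/-- `ψ` is a good (convex piecewise-linear) function for the subdivision `X'` relative to the
cones of the base fan `X`: on each cone `τ` of `X`, `ψ` is convex, linear on each cone of
`X'` contained in `τ`, and the maximal subcones of linearity of `ψ` inside `τ` are exactly
the cones of `X'` (i.e. any convex subset of `τ` on which `ψ` is linear lies in one of them). -/
def IsGoodFor (X X' : Set (Set (V n))) (ψ : V n → ℚ) : Prop :=
  ∀ τ ∈ X, ConvexOn ℚ τ ψ ∧
    (∀ σ' ∈ X', σ' ⊆ τ → ∃ m : (V n) →ₗ[ℚ] ℚ, ∀ x ∈ σ', ψ x = m x) ∧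
    (∀ (m : (V n) →ₗ[ℚ] ℚ) (t : Set (V n)), t ⊆ τ → Convex ℚ t →
      (∀ x ∈ t, ψ x = m x) → ∃ σ' ∈ X', σ' ⊆ τ ∧ t ⊆ σ')

/-- Sign conditions of a good sorting function with respect to the quadruple data on `X'`. -/
def SignedOn (X' B' C' H' : Set (Set (V n))) (ψ : V n → ℚ) : Prop :=
  (∀ ν ∈ B', ∀ x ∈ ν, 0 ≤ ψ x) ∧ (∀ ν ∈ C', ∀ x ∈ ν, ψ x ≤ 0) ∧
  (∀ ν ∈ raysIn X', ν ∉ B' → ν ∉ C' → ν ∉ H' → ∀ x ∈ ν, ψ x = 0)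

/-- Sign conditions restricted to the rays contained in a cone `τ`. -/
def SignedOnIn (τ : Set (V n)) (X' B' C' H' : Set (Set (V n))) (ψ : V n → ℚ) : Prop :=
  (∀ ν ∈ B', ν ⊆ τ → ∀ x ∈ ν, 0 ≤ ψ x) ∧ (∀ ν ∈ C', ν ⊆ τ → ∀ x ∈ ν, ψ x ≤ 0) ∧
  (∀ ν ∈ raysIn X', ν ⊆ τ → ν ∉ B' → ν ∉ C' → ν ∉ H' → ∀ x ∈ ν, ψ x = 0)

/-- A convex subdivision, with respect to a fan quadruple structure on `X'`. -/
def IsConvexSubdiv (X' X B' C' H' : Set (Set (V n))) : Prop :=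
  IsSubdivision X' X ∧ ∃ ψ : V n → ℚ, IsGoodFor X X' ψ ∧ SignedOn X' B' C' H' ψ

/-- A locally-convex subdivision: for each cone of the base there is a good sorting function
on that cone. -/
def IsLocallyConvexSubdiv (X' X B' C' H' : Set (Set (V n))) : Prop :=
  IsSubdivision X' X ∧
    ∀ τ ∈ X, ∃ ψ : V n → ℚ, IsGoodFor {τ} X' ψ ∧ SignedOnIn τ X' B' C' H' ψ

/-- Star subdivision of `X` at a ray `ν` contained in the support of `X`. -/
def starSubdiv (X : Set (Set (V n))) (ν : Set (V n)) : Set (Set (V n)) :=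
  {σ | σ ∈ X ∧ ¬ ν ⊆ σ} ∪
  {τ | ∃ σ ∈ X, ν ⊆ σ ∧ ∃ ξ, IsFaceOf ξ σ ∧ ¬ ν ⊆ ξ ∧ τ = coneHull (ξ ∪ ν)}

/-- The set `S` of facets used in the extension construction `Ext(𝔗, ν)`. -/
noncomputable def extS (τ ν : Set (V n)) : Set (Set (V n)) :=
  if coneDim (coneHull (τ ∪ ν)) = coneDim τ + 1 then {τ}
  else {ζ | (IsFaceOf ζ τ ∧ coneDim ζ + 1 = coneDim τ) ∧
    ∃ m : (V n) →ₗ[ℚ] ℚ, (∀ x ∈ ζ, m x = 0) ∧ (∃ v ∈ ν, v ≠ 0 ∧ m v = -1) ∧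
      ∀ x ∈ τ, x ∉ ζ → 0 < m x}

/-- All faces of cones of `extS τ ν`. -/
noncomputable def extFaces (τ ν : Set (V n)) : Set (Set (V n)) :=
  {ξ | ∃ ζ ∈ extS τ ν, IsFaceOf ξ ζ}

/-- The extension `Ext(𝔗, ν)` of the affine fan of `τ` by the ray `ν`. -/
noncomputable def Ext (τ ν : Set (V n)) : Set (Set (V n)) :=
  {ν} ∪ faces τ ∪ (fun ξ => coneHull (ξ ∪ ν)) '' extFaces τ ν

/-- The extension `Ext(𝔗', ν)` of a subdivision `𝒯'` of the affine fan of `τ` by the ray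
`ν`. -/
noncomputable def ExtSub (T' : Set (Set (V n))) (τ ν : Set (V n)) : Set (Set (V n)) :=
  {ν} ∪ T' ∪ (fun ξ => coneHull (ξ ∪ ν)) ''
    {ξ | ∃ ζ' ∈ T', (∃ ζ ∈ extS τ ν, ζ' ⊆ ζ) ∧ IsFaceOf ξ ζ'}

/-- Sequential convexity of a sequence of star subdivisions (the list gives the rays in the
order in which the star subdivisions are performed). -/
def SeqConvex (B C H : Set (Set (V n))) : Set (Set (V n)) → List (Set (V n)) → Prop
  | _, [] => True
  | X, ν :: rest =>
      IsLocallyConvexSubdiv (starSubdiv X ν) X B C H ∧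
      SeqConvex B C H (starSubdiv X ν) rest

/-- closure properties predicate -/
structure IsConeSet (σ : Set (V n)) : Prop where
  zero_mem : (0 : V n) ∈ σ
  smul_mem : ∀ a : ℚ, 0 ≤ a → ∀ x ∈ σ, a • x ∈ σ
  add_mem : ∀ x ∈ σ, ∀ y ∈ σ, x + y ∈ σ

lemma subset_coneHull (A : Set (V n)) : A ⊆ coneHull A := by
  intro x hx
  exact ⟨{x}, by simpa using hx, fun _ => 1, by simp, by simp⟩

lemma zero_mem_coneHull (A : Set (V n)) : (0 : V n) ∈ coneHull A :=
  ⟨∅, by simp, fun _ => 0, by simp, by simp⟩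

lemma smul_mem_coneHull {A : Set (V n)} {a : ℚ} (ha : 0 ≤ a) {x : V n}
    (hx : x ∈ coneHull A) : a • x ∈ coneHull A := by
  obtain ⟨t, ht, c, hc, rfl⟩ := hx
  refine ⟨t, ht, fun v => a * c v, fun v hv => mul_nonneg ha (hc v hv), ?_⟩
  rw [Finset.smul_sum]
  exact Finset.sum_congr rfl (fun v _ => (mul_smul a (c v) v).symm)

lemma add_mem_coneHull {A : Set (V n)} {x y : V n}
    (hx : x ∈ coneHull A) (hy : y ∈ coneHull A) : x + y ∈ coneHull A := by
  classical
  obtain ⟨t, ht, c, hc, rfl⟩ := hx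
  obtain ⟨s, hs, d, hd, rfl⟩ := hy
  refine ⟨t ∪ s, by simp [Finset.coe_union, Set.union_subset ht hs],
    fun v => (if v ∈ t then c v else 0) + (if v ∈ s then d v else 0), ?_, ?_⟩
  · intro v _
    have h1 : 0 ≤ (if v ∈ t then c v else 0) := by split <;> [exact hc v ‹_›; rfl]
    have h2 : 0 ≤ (if v ∈ s then d v else 0) := by split <;> [exact hd v ‹_›; rfl]
    exact add_nonneg h1 h2
  · rw [Finset.sum_congr rfl (g := fun v =>
      (if v ∈ t then c v else 0) • v + (if v ∈ s then d v else 0) • v)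
      (fun v _ => add_smul _ _ v), Finset.sum_add_distrib]
    congr 1
    · rw [← Finset.sum_subset (Finset.subset_union_left (s₂ := s))]
      · exact Finset.sum_congr rfl (fun v hv => by simp [hv])
      · intro v _ hv; simp [hv]
    · rw [← Finset.sum_subset (Finset.subset_union_right (s₁ := t))]
      · exact Finset.sum_congr rfl (fun v hv => by simp [hv])
      · intro v _ hv; simp [hv]

lemma isConeSet_coneHull (A : Set (V n)) : IsConeSet (coneHull A) :=
  ⟨zero_mem_coneHull A, fun _ ha _ hx => smul_mem_coneHull ha hx,
    fun _ hx _ hy => add_mem_coneHull hx hy⟩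

lemma coneHull_min {A P : Set (V n)} (hAP : A ⊆ P) (hP : IsConeSet P) :
    coneHull A ⊆ P := by
  rintro x ⟨t, ht, c, hc, rfl⟩
  refine Finset.sum_induction _ (· ∈ P) (fun a b ha hb => hP.add_mem a ha b hb)
    hP.zero_mem (fun v hv => hP.smul_mem _ (hc v hv) _ (hAP (ht hv)))

lemma coneHull_mono {A B : Set (V n)} (h : A ⊆ B) : coneHull A ⊆ coneHull B :=
  coneHull_min (h.trans (subset_coneHull B)) (isConeSet_coneHull B)

lemma coneHull_eq_self {A : Set (V n)} (h : IsConeSet A) : coneHull A = A :=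
  le_antisymm (coneHull_min le_rfl h) (subset_coneHull A)

lemma coneHull_union_subset_add {A B : Set (V n)} :
    coneHull (A ∪ B) ⊆ {z | ∃ a ∈ coneHull A, ∃ b ∈ coneHull B, z = a + b} := by
  refine coneHull_min ?_ ⟨⟨0, zero_mem_coneHull A, 0, zero_mem_coneHull B, by simp⟩, ?_, ?_⟩
  · rintro x (hx | hx)
    · exact ⟨x, subset_coneHull A hx, 0, zero_mem_coneHull B, by simp⟩
    · exact ⟨0, zero_mem_coneHull A, x, subset_coneHull B hx, by simp⟩
  · rintro t ht x ⟨a, ha, b, hb, rfl⟩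
    exact ⟨t • a, smul_mem_coneHull ht ha, t • b, smul_mem_coneHull ht hb, by
      simp [smul_add]⟩
  · rintro x ⟨a, ha, b, hb, rfl⟩ y ⟨a', ha', b', hb', rfl⟩
    exact ⟨a + a', add_mem_coneHull ha ha', b + b', add_mem_coneHull hb hb', by abel⟩

lemma add_mem_coneHull_union {A B : Set (V n)} {a b : V n}
    (ha : a ∈ coneHull A) (hb : b ∈ coneHull B) : a + b ∈ coneHull (A ∪ B) :=
  add_mem_coneHull (coneHull_mono Set.subset_union_left ha)
    (coneHull_mono Set.subset_union_right hb)

lemma convex_of_coneSet {A : Set (V n)} (h : IsConeSet A) : Convex ℚ A := by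
  intro x hx y hy a b ha hb _
  exact h.add_mem _ (h.smul_mem a ha x hx) _ (h.smul_mem b hb y hy)


-- SECTION 2 : faces

lemma IsFaceOf.subset {F σ : Set (V n)} (h : IsFaceOf F σ) : F ⊆ σ := by
  obtain ⟨m, _, rfl⟩ := h; exact fun x hx => hx.1

lemma IsFaceOf.refl (σ : Set (V n)) : IsFaceOf σ σ :=
  ⟨0, by simp, by simp⟩

lemma IsFaceOf.coneSet {F σ : Set (V n)} (h : IsFaceOf F σ) (hσ : IsConeSet σ) :
    IsConeSet F := by
  obtain ⟨m, hm, rfl⟩ := h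
  refine ⟨⟨hσ.zero_mem, by simp⟩, ?_, ?_⟩
  · intro a ha x hx
    exact ⟨hσ.smul_mem a ha x hx.1, by simp [hx.2]⟩
  · intro x hx y hy
    exact ⟨hσ.add_mem x hx.1 y hy.1, by simp [hx.2, hy.2]⟩

/-- A face of `coneHull S` is the cone hull of the generators it contains. -/
lemma IsFaceOf.eq_coneHull_filter {S : Finset (V n)} {F : Set (V n)}
    {m : (V n) →ₗ[ℚ] ℚ} (hm : ∀ x ∈ coneHull (S : Set (V n)), 0 ≤ m x)
    (hF : F = {x ∈ coneHull (S : Set (V n)) | m x = 0}) :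
    F = coneHull ((S.filter (fun u => m u = 0) : Finset (V n)) : Set (V n)) := by
  classical
  have hFcone : IsConeSet F := by
    refine IsFaceOf.coneSet ⟨m, hm, hF⟩ (isConeSet_coneHull _)
  apply le_antisymm
  · rintro x hx
    rw [hF] at hx
    obtain ⟨⟨t, ht, c, hc, rfl⟩, hmx⟩ := hx
    have hterm : ∀ v ∈ t, c v * m v = 0 := by
      rw [map_sum] at hmx
      have : ∀ v ∈ t, 0 ≤ c v * m v := fun v hv =>
        mul_nonneg (hc v hv) (hm v (subset_coneHull _ (ht hv)))
      intro v hv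
      refine (Finset.sum_eq_zero_iff_of_nonneg this).mp ?_ v hv
      rw [← hmx]
      exact Finset.sum_congr rfl (fun v _ => by simp [map_smul, smul_eq_mul])
    refine ⟨t.filter (fun u => m u = 0), ?_, c, fun v hv => hc v (Finset.mem_filter.mp hv).1, ?_⟩
    · intro v hv
      simp only [Finset.coe_filter, Set.mem_setOf_eq, Finset.mem_coe, Finset.mem_filter] at hv ⊢
      exact ⟨ht (Finset.mem_coe.mpr hv.1), hv.2⟩
    · rw [Finset.sum_filter]
      refine Finset.sum_congr rfl (fun v hv => ?_)
      by_cases h : m v = 0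
      · simp [h]
      · have : c v = 0 := by
          rcases mul_eq_zero.mp (hterm v hv) with h' | h'
          · exact h'
          · exact absurd h' h
        simp [h, this]
  · refine coneHull_min ?_ hFcone
    intro u hu
    simp only [Finset.coe_filter, Set.mem_setOf_eq] at hu
    rw [hF]
    exact ⟨subset_coneHull _ hu.1, hu.2⟩

lemma IsFaceOf.isPolyCone {F σ : Set (V n)} (h : IsFaceOf F σ) (hσ : IsPolyCone σ) :
    IsPolyCone F := by
  classical
  obtain ⟨S, rfl⟩ := hσ
  obtain ⟨m, hm, hF⟩ := h
  exact ⟨_, IsFaceOf.eq_coneHull_filter hm hF⟩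


lemma faces_finite {σ : Set (V n)} (hσ : IsPolyCone σ) : (faces σ).Finite := by
  classical
  obtain ⟨S, rfl⟩ := hσ
  have hfin : (↑(S.powerset) : Set (Finset (V n))).Finite := (S.powerset).finite_toSet
  refine Set.Finite.subset (hfin.image (fun (T : Finset (V n)) => coneHull (T : Set (V n)))) ?_
  rintro F ⟨m, hm, hF⟩
  exact ⟨S.filter (fun u => m u = 0), Finset.mem_coe.mpr (Finset.mem_powerset.mpr (Finset.filter_subset _ _)),
    (IsFaceOf.eq_coneHull_filter hm hF).symm⟩

/-- transitivity of faces for polyhedral cones -/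
lemma IsFaceOf.trans {G F σ : Set (V n)} (hGF : IsFaceOf G F) (hFσ : IsFaceOf F σ)
    (hσ : IsPolyCone σ) : IsFaceOf G σ := by
  classical
  obtain ⟨S, rfl⟩ := hσ
  obtain ⟨m, hm, hF⟩ := hFσ
  obtain ⟨m', hm', hG⟩ := hGF
  -- choose N large
  have hmS : ∀ u ∈ S, 0 ≤ m u := fun u hu => hm u (subset_coneHull _ hu)
  obtain ⟨N, hN⟩ : ∃ N : ℚ, ∀ u ∈ S, 0 < m u → 0 < N * m u + m' u := by
    refine ⟨1 + (Finset.image (fun u => -(m' u) / (m u)) (S.filter (fun u => 0 < m u))).fold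
      max 0 id, ?_⟩
    intro u hu hmu
    have hle : -(m' u) / (m u) ≤ (Finset.image (fun u => -(m' u) / (m u))
        (S.filter (fun u => 0 < m u))).fold max 0 id := by
      exact (Finset.le_fold_max _).mpr (Or.inr
        ⟨_, Finset.mem_image_of_mem _ (Finset.mem_filter.mpr ⟨hu, hmu⟩), le_rfl⟩)
    have h1 : -(m' u) / (m u) < 1 + (Finset.image (fun u => -(m' u) / (m u))
        (S.filter (fun u => 0 < m u))).fold max 0 id := by linarith
    have := (div_lt_iff₀ hmu).mp h1
    linarith
  set m'' : (V n) →ₗ[ℚ] ℚ := N • m + m' with hm''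
  have hm''u : ∀ u ∈ S, 0 ≤ m'' u := by
    intro u hu
    rcases lt_or_eq_of_le (hmS u hu) with h | h
    · exact le_of_lt (by simpa [hm'', mul_comm] using hN u hu h)
    · have huF : u ∈ F := by rw [hF]; exact ⟨subset_coneHull _ hu, h.symm⟩
      have := hm' u huF
      simp [hm'', ← h]
      linarith [hm' u huF]
  have hm''σ : ∀ x ∈ coneHull (S : Set (V n)), 0 ≤ m'' x := by
    rintro x ⟨t, ht, c, hc, rfl⟩
    rw [map_sum]
    apply Finset.sum_nonneg
    intro v hv
    simp only [map_smul, smul_eq_mul]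
    exact mul_nonneg (hc v hv) (hm''u v (ht hv))
  refine ⟨m'', hm''σ, ?_⟩
  rw [hG, hF]
  ext x
  simp only [Set.mem_setOf_eq]
  constructor
  · rintro ⟨⟨hxσ, hmx⟩, hm'x⟩
    exact ⟨hxσ, by simp [hm'', hmx, hm'x]⟩
  · rintro ⟨hxσ, hm''x⟩
    -- show m x = 0 and m' x = 0
    obtain ⟨t, ht, c, hc, rfl⟩ := hxσ
    have hterm : ∀ v ∈ t, c v * m'' v = 0 := by
      have hnn : ∀ v ∈ t, 0 ≤ c v * m'' v := fun v hv =>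
        mul_nonneg (hc v hv) (hm''u v (ht hv))
      intro v hv
      refine (Finset.sum_eq_zero_iff_of_nonneg hnn).mp ?_ v hv
      rw [← hm''x, map_sum]
      exact Finset.sum_congr rfl (fun v _ => by simp [map_smul, smul_eq_mul])
    have hkey : ∀ v ∈ t, c v * m v = 0 ∧ c v * m' v = 0 := by
      intro v hv
      rcases mul_eq_zero.mp (hterm v hv) with h | h
      · simp [h]
      · rcases lt_or_eq_of_le (hmS v (ht hv)) with h2 | h2
        · exact absurd h (ne_of_gt (by simpa [hm'', mul_comm] using hN v (ht hv) h2))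
        · have hvF : v ∈ F := by rw [hF]; exact ⟨subset_coneHull _ (ht hv), h2.symm⟩
          have h3 : m' v = 0 := by
            have := hm' v hvF
            simp only [hm'', LinearMap.add_apply, LinearMap.smul_apply, smul_eq_mul] at h
            rw [← h2] at h; simp at h; linarith
          simp [← h2, h3]
    have hmx : m (∑ v ∈ t, c v • v) = 0 := by
      rw [map_sum]
      apply Finset.sum_eq_zero
      intro v hv
      simp only [map_smul, smul_eq_mul]
      exact (hkey v hv).1
    have hm'x : m' (∑ v ∈ t, c v • v) = 0 := by
      rw [map_sum]
      apply Finset.sum_eq_zero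
      intro v hv
      simp only [map_smul, smul_eq_mul]
      exact (hkey v hv).2
    exact ⟨⟨⟨t, ht, c, hc, rfl⟩, hmx⟩, hm'x⟩

/-- intersection of a face of σ with any face F' is a face of the face F -/
lemma IsFaceOf.inter_left {F F' σ : Set (V n)} (hF : IsFaceOf F σ) (hF' : IsFaceOf F' σ) :
    IsFaceOf (F ∩ F') F := by
  obtain ⟨m', hm', rfl⟩ := hF'
  refine ⟨m', fun x hx => hm' x (hF.subset hx), ?_⟩
  ext x
  constructor
  · rintro ⟨hxF, hxσ, hm'x⟩; exact ⟨hxF, hm'x⟩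
  · rintro ⟨hxF, hm'x⟩; exact ⟨hxF, hF.subset hxF, hm'x⟩

lemma IsFaceOf.inter_isFace {F F' σ : Set (V n)} (hF : IsFaceOf F σ) (hF' : IsFaceOf F' σ) :
    IsFaceOf (F ∩ F') σ := by
  obtain ⟨m, hm, rfl⟩ := hF
  obtain ⟨m', hm', rfl⟩ := hF'
  refine ⟨m + m', fun x hx => add_nonneg (hm x hx) (hm' x hx), ?_⟩
  ext x
  simp only [Set.mem_inter_iff, Set.mem_setOf_eq, LinearMap.add_apply]
  constructor
  · rintro ⟨⟨hxσ, h1⟩, _, h2⟩; exact ⟨hxσ, by rw [h1, h2]; ring⟩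
  · rintro ⟨hxσ, h⟩
    have h1 := hm x hxσ
    have h2 := hm' x hxσ
    exact ⟨⟨hxσ, by linarith⟩, hxσ, by linarith⟩


-- SECTION 3 : Weyl's theorem (V-description implies H-description)

lemma mem_coneHull_insert {S : Finset (V n)} {u x : V n} :
    x ∈ coneHull ((insert u S : Finset (V n)) : Set (V n)) ↔
      ∃ a : ℚ, 0 ≤ a ∧ x - a • u ∈ coneHull (S : Set (V n)) := by
  classical
  constructor
  · rintro ⟨t, ht, c, hc, rfl⟩
    by_cases hu : u ∈ t
    · refine ⟨c u, hc u hu, t.erase u, ?_, c, fun v hv => hc v (Finset.mem_of_mem_erase hv), ?_⟩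
      · intro v hv
        have hv' := Finset.mem_coe.mp hv
        have := ht (Finset.mem_coe.mpr (Finset.mem_of_mem_erase hv'))
        simp only [Finset.coe_insert, Set.mem_insert_iff] at this
        rcases this with rfl | h
        · exact absurd rfl (Finset.ne_of_mem_erase hv')
        · exact h
      · rw [← Finset.add_sum_erase _ _ hu]
        abel
    · refine ⟨0, le_rfl, t, ?_, c, hc, by simp⟩
      intro v hv
      have := ht hv
      simp only [Finset.coe_insert, Set.mem_insert_iff] at this
      rcases this with rfl | h
      · exact absurd (Finset.mem_coe.mp hv) hu
      · exact h
  · rintro ⟨a, ha, hx⟩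
    have h1 : x - a • u ∈ coneHull ((insert u S : Finset (V n)) : Set (V n)) :=
      coneHull_mono (by simp [Finset.coe_insert, Set.subset_insert]) hx
    have h2 : a • u ∈ coneHull ((insert u S : Finset (V n)) : Set (V n)) :=
      smul_mem_coneHull ha (subset_coneHull _ (by simp))
    simpa using add_mem_coneHull h1 h2

/-- Fourier–Motzkin elimination step. -/
lemma fourier_motzkin (I : Finset ((V n) →ₗ[ℚ] ℚ)) (u : V n) :
    ∃ J : Finset ((V n) →ₗ[ℚ] ℚ), ∀ x : V n,
      (∃ a : ℚ, 0 ≤ a ∧ ∀ m ∈ I, 0 ≤ m (x - a • u)) ↔ ∀ m ∈ J, 0 ≤ m x := by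
  classical
  set P := I.filter (fun m => 0 < m u) with hP
  set Z := I.filter (fun m => m u = 0) with hZ
  set Nn := I.filter (fun m => m u < 0) with hNn
  refine ⟨Z ∪ P ∪ Finset.image
    (fun q : ((V n) →ₗ[ℚ] ℚ) × ((V n) →ₗ[ℚ] ℚ) => (q.1 u) • q.2 - (q.2 u) • q.1)
    (P ×ˢ Nn), fun x => ?_⟩
  have hsub : ∀ (m : (V n) →ₗ[ℚ] ℚ) (a : ℚ), m (x - a • u) = m x - a * m u := by
    intro m a; simp [map_sub, map_smul, smul_eq_mul]
  constructor
  · rintro ⟨a, ha, hmem⟩ m' hm'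
    simp only [Finset.mem_union, Finset.mem_image] at hm'
    rcases hm' with (hm' | hm') | ⟨⟨p, q⟩, hpq, rfl⟩
    · have hmu : m' u = 0 := (Finset.mem_filter.mp hm').2
      have := hmem m' (Finset.mem_filter.mp hm').1
      rw [hsub, hmu] at this; linarith
    · have hmu : 0 < m' u := (Finset.mem_filter.mp hm').2
      have := hmem m' (Finset.mem_filter.mp hm').1
      rw [hsub] at this
      nlinarith
    · rw [Finset.mem_product] at hpq
      have hpu : 0 < p u := (Finset.mem_filter.mp hpq.1).2
      have hqu : q u < 0 := (Finset.mem_filter.mp hpq.2).2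
      have h1 := hmem p (Finset.mem_filter.mp hpq.1).1
      have h2 := hmem q (Finset.mem_filter.mp hpq.2).1
      rw [hsub] at h1 h2
      simp only [LinearMap.sub_apply, LinearMap.smul_apply, smul_eq_mul]
      nlinarith
  · intro h
    have hZx : ∀ m ∈ Z, 0 ≤ m x := fun m hm =>
      h m (by simp only [Finset.mem_union]; exact Or.inl (Or.inl hm))
    have hPx : ∀ m ∈ P, 0 ≤ m x := fun m hm =>
      h m (by simp only [Finset.mem_union]; exact Or.inl (Or.inr hm))
    have hPair : ∀ p ∈ P, ∀ q ∈ Nn, 0 ≤ p u * q x - q u * p x := by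
      intro p hp q hq
      have := h _ (by
        simp only [Finset.mem_union, Finset.mem_image]
        exact Or.inr ⟨(p, q), Finset.mem_product.mpr ⟨hp, hq⟩, rfl⟩)
      simpa using this
    by_cases hPne : P.Nonempty
    · set a := P.inf' hPne (fun p => p x / p u) with ha
      have ha0 : 0 ≤ a := by
        apply Finset.le_inf'
        intro p hp
        exact div_nonneg (hPx p hp) (le_of_lt (Finset.mem_filter.mp hp).2)
      obtain ⟨p₀, hp₀, hp₀a⟩ := Finset.exists_mem_eq_inf' hPne (fun p => p x / p u)
      have hp₀u : 0 < p₀ u := (Finset.mem_filter.mp hp₀).2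
      refine ⟨a, ha0, fun m hm => ?_⟩
      rw [hsub]
      rcases lt_trichotomy (m u) 0 with hmu | hmu | hmu
      · have hpair := hPair p₀ hp₀ m (Finset.mem_filter.mpr ⟨hm, hmu⟩)
        have haa : a = p₀ x / p₀ u := hp₀a
        rw [haa, sub_nonneg, div_mul_eq_mul_div, div_le_iff₀ hp₀u]
        nlinarith
      · rw [hmu, mul_zero, sub_zero]
        exact hZx m (Finset.mem_filter.mpr ⟨hm, hmu⟩)
      · have hmP : m ∈ P := Finset.mem_filter.mpr ⟨hm, hmu⟩
        have : a ≤ m x / m u := Finset.inf'_le _ hmP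
        rw [sub_nonneg]
        calc a * m u ≤ (m x / m u) * m u := by nlinarith
          _ = m x := div_mul_cancel₀ _ (ne_of_gt hmu)
    · set E := insert (0:ℚ) (Nn.image (fun m => m x / m u)) with hE
      have hEne : E.Nonempty := ⟨0, by simp [hE]⟩
      set a := E.max' hEne with ha
      have ha0 : 0 ≤ a := Finset.le_max' _ _ (by simp [hE])
      refine ⟨a, ha0, fun m hm => ?_⟩
      rw [hsub]
      rcases lt_trichotomy (m u) 0 with hmu | hmu | hmu
      · have hmem : m x / m u ∈ E := by
          simp only [hE, Finset.mem_insert, Finset.mem_image]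
          exact Or.inr ⟨m, Finset.mem_filter.mpr ⟨hm, hmu⟩, rfl⟩
        have hle : m x / m u ≤ a := Finset.le_max' _ _ hmem
        rw [sub_nonneg]
        calc a * m u ≤ (m x / m u) * m u := by nlinarith
          _ = m x := div_mul_cancel₀ _ (ne_of_lt hmu)
      · rw [hmu, mul_zero, sub_zero]
        exact hZx m (Finset.mem_filter.mpr ⟨hm, hmu⟩)
      · exact absurd ⟨m, Finset.mem_filter.mpr ⟨hm, hmu⟩⟩ hPne

/-- Weyl's theorem: every finitely generated cone is a finite intersection of halfspaces. -/
theorem weyl (S : Finset (V n)) :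
    ∃ I : Finset ((V n) →ₗ[ℚ] ℚ), ∀ x : V n,
      x ∈ coneHull (S : Set (V n)) ↔ ∀ m ∈ I, 0 ≤ m x := by
  classical
  induction S using Finset.induction_on with
  | empty =>
    refine ⟨(Finset.univ.image (fun i : Fin n => (LinearMap.proj i : (V n) →ₗ[ℚ] ℚ))) ∪
      (Finset.univ.image (fun i : Fin n => -(LinearMap.proj i : (V n) →ₗ[ℚ] ℚ))), fun x => ?_⟩
    constructor
    · rintro ⟨t, ht, c, hc, rfl⟩
      have : t = ∅ := Finset.subset_empty.mp (by
        intro v hv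
        exact absurd (ht hv) (by simp))
      subst this
      simp
    · intro h
      have hx : x = 0 := by
        funext i
        have h1 := h (LinearMap.proj i) (by simp)
        have h2 := h (-(LinearMap.proj i : (V n) →ₗ[ℚ] ℚ)) (by simp)
        simp only [LinearMap.proj_apply, LinearMap.neg_apply] at h1 h2
        have : x i = 0 := le_antisymm (by linarith) h1
        simpa using this
      rw [hx]
      exact zero_mem_coneHull _
  | @insert u S' hu ih =>
    obtain ⟨I, hI⟩ := ih
    obtain ⟨J, hJ⟩ := fourier_motzkin I u
    refine ⟨J, fun x => ?_⟩
    rw [mem_coneHull_insert, ← hJ x]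
    constructor
    · rintro ⟨a, ha, hmem⟩
      exact ⟨a, ha, fun m hm => (hI _).mp hmem m hm⟩
    · rintro ⟨a, ha, hmem⟩
      exact ⟨a, ha, (hI _).mpr hmem⟩


-- SECTION 4 : rays and the lambda function

lemma exists_ne_zero_of_coneDim_one {ρ : Set (V n)} (h : coneDim ρ = 1) :
    ∃ v ∈ ρ, v ≠ (0 : V n) := by
  by_contra hc
  push_neg at hc
  have : ρ ⊆ {(0 : V n)} := fun x hx => hc x hx
  have h0 : Submodule.span ℚ ρ ≤ ⊥ := by
    rw [← Submodule.span_empty (R := ℚ) (M := V n)]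
    refine le_trans (Submodule.span_mono this) ?_
    simp
  have : coneDim ρ = 0 := by
    unfold coneDim
    rw [le_bot_iff.mp h0]
    simp
  omega

lemma span_eq_span_singleton_of_coneDim_one {ρ : Set (V n)} (h : coneDim ρ = 1)
    {v : V n} (hv : v ∈ ρ) (hv0 : v ≠ 0) :
    Submodule.span ℚ ρ = Submodule.span ℚ ({v} : Set (V n)) := by
  have hle : Submodule.span ℚ ({v} : Set (V n)) ≤ Submodule.span ℚ ρ :=
    Submodule.span_mono (by simpa using hv)
  refine (Submodule.eq_of_le_of_finrank_le hle ?_).symm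
  rw [finrank_span_singleton hv0]
  unfold coneDim at h
  omega

/-- structure of rays: a 1-dimensional face of a strongly convex cone-set. -/
lemma ray_eq_smul {τ ρ : Set (V n)} (hsc : StronglyConvex τ) (hτcs : IsConeSet τ)
    (hface : IsFaceOf ρ τ) (hdim : coneDim ρ = 1) {v : V n} (hv : v ∈ ρ) (hv0 : v ≠ 0) :
    ρ = {x | ∃ t : ℚ, 0 ≤ t ∧ x = t • v} := by
  have hρcs : IsConeSet ρ := hface.coneSet hτcs
  have hspan := span_eq_span_singleton_of_coneDim_one hdim hv hv0
  ext x
  constructor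
  · intro hx
    have : x ∈ Submodule.span ℚ ({v} : Set (V n)) := by
      rw [← hspan]
      exact Submodule.subset_span hx
    obtain ⟨t, rfl⟩ := Submodule.mem_span_singleton.mp this
    refine ⟨t, ?_, rfl⟩
    by_contra hlt
    push_neg at hlt
    have hneg : -(t • v) ∈ ρ := by
      have : -(t • v) = (-t) • v := by simp
      rw [this]
      exact hρcs.smul_mem (-t) (by linarith) v hv
    have := hsc _ (hface.subset hx) (hface.subset hneg)
    rw [smul_eq_zero] at this
    rcases this with h | h
    · linarith
    · exact hv0 h
  · rintro ⟨t, ht, rfl⟩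
    exact hρcs.smul_mem t ht v hv

/-- for a face not containing the ray, the defining functional is positive on `v`. -/
lemma face_functional_pos {τ ν ξ : Set (V n)}
    (hν : IsFaceOf ν τ) {v : V n} (hv : v ∈ ν)
    (heq : ν = {x | ∃ t : ℚ, 0 ≤ t ∧ x = t • v})
    {m : (V n) →ₗ[ℚ] ℚ} (hm : ∀ x ∈ τ, 0 ≤ m x) (hξ : ξ = {x ∈ τ | m x = 0})
    (hνξ : ¬ ν ⊆ ξ) : 0 < m v := by
  rcases lt_or_eq_of_le (hm v (hν.subset hv)) with h | h
  · exact h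
  · exfalso
    apply hνξ
    intro z hz
    have hzτ : z ∈ τ := hν.subset hz
    obtain ⟨t, ht, rfl⟩ := heq ▸ hz
    rw [hξ]
    exact ⟨hzτ, by simp [← h]⟩



-- SECTION 5 : the lambda function from a half-space description

structure GoodLam (τ : Set (V n)) (v : V n) where
  P' : Finset ((V n) →ₗ[ℚ] ℚ)
  hne : P'.Nonempty
  pos : ∀ p ∈ P', 0 < p v
  nonneg : ∀ p ∈ P', ∀ x ∈ τ, 0 ≤ p x
  mem : ∀ x ∈ τ, x - (P'.inf' hne fun p => p x / p v) • v ∈ τ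
  ge : ∀ x ∈ τ, ∀ t : ℚ, x - t • v ∈ τ → t ≤ P'.inf' hne fun p => p x / p v

noncomputable def GoodLam.lam {τ : Set (V n)} {v : V n} (L : GoodLam τ v) : V n → ℚ :=
  fun x => L.P'.inf' L.hne fun p => p x / p v

lemma GoodLam.lam_mem {τ : Set (V n)} {v : V n} (L : GoodLam τ v) {x : V n} (hx : x ∈ τ) :
    x - (L.lam x) • v ∈ τ := L.mem x hx

lemma GoodLam.lam_ge {τ : Set (V n)} {v : V n} (L : GoodLam τ v) {x : V n} (hx : x ∈ τ)
    {t : ℚ} (h : x - t • v ∈ τ) : t ≤ L.lam x := L.ge x hx t h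

lemma GoodLam.lam_le {τ : Set (V n)} {v : V n} (L : GoodLam τ v) {p : (V n) →ₗ[ℚ] ℚ}
    (hp : p ∈ L.P') (x : V n) : L.lam x ≤ p x / p v :=
  Finset.inf'_le _ hp

lemma GoodLam.lam_nonneg {τ : Set (V n)} {v : V n} (L : GoodLam τ v) {x : V n} (hx : x ∈ τ) :
    0 ≤ L.lam x :=
  Finset.le_inf' _ _ (fun p hp => div_nonneg (L.nonneg p hp x hx) (le_of_lt (L.pos p hp)))

lemma GoodLam.exists_argmin {τ : Set (V n)} {v : V n} (L : GoodLam τ v) (x : V n) :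
    ∃ p ∈ L.P', L.lam x = p x / p v :=
  Finset.exists_mem_eq_inf' L.hne _

/-- concavity of lam -/
lemma GoodLam.lam_concave {τ : Set (V n)} {v : V n} (L : GoodLam τ v)
    (x y : V n) (a b : ℚ) (ha : 0 ≤ a) (hb : 0 ≤ b) :
    a * L.lam x + b * L.lam y ≤ L.lam (a • x + b • y) := by
  obtain ⟨p, hp, hpeq⟩ := L.exists_argmin (a • x + b • y)
  rw [hpeq]
  have h1 : L.lam x ≤ p x / p v := L.lam_le hp x
  have h2 : L.lam y ≤ p y / p v := L.lam_le hp y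
  have hpv : 0 < p v := L.pos p hp
  have : p (a • x + b • y) / p v = a * (p x / p v) + b * (p y / p v) := by
    simp only [map_add, map_smul, smul_eq_mul]
    field_simp
  rw [this]
  have := mul_le_mul_of_nonneg_left h1 ha
  have := mul_le_mul_of_nonneg_left h2 hb
  linarith

lemma exists_goodLam {τ : Set (V n)} (hτ : IsPolyCone τ) (hsc : StronglyConvex τ)
    {v : V n} (hv : v ∈ τ) (hv0 : v ≠ 0) : Nonempty (GoodLam τ v) := by
  classical
  obtain ⟨S, rfl⟩ := hτ
  obtain ⟨P, hP⟩ := weyl S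
  set P' := P.filter (fun p => 0 < p v) with hP'
  have hvP : ∀ p ∈ P, 0 ≤ p v := fun p hp => (hP v).mp hv p hp
  have hne : P'.Nonempty := by
    by_contra hempty
    rw [Finset.not_nonempty_iff_eq_empty] at hempty
    have hzero : ∀ p ∈ P, p v = 0 := by
      intro p hp
      rcases lt_or_eq_of_le (hvP p hp) with h | h
      · exfalso
        have hmem : p ∈ P' := Finset.mem_filter.mpr ⟨hp, h⟩
        rw [hempty] at hmem
        exact absurd hmem (Finset.notMem_empty p)
      · exact h.symm
    have hneg : -v ∈ coneHull (S : Set (V n)) := by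
      rw [hP]
      intro p hp
      simp [hzero p hp]
    exact hv0 (hsc v hv hneg)
  refine ⟨⟨P', hne, fun p hp => (Finset.mem_filter.mp hp).2,
    fun p hp x hx => (hP x).mp hx p (Finset.mem_filter.mp hp).1, ?_, ?_⟩⟩
  · intro x hx
    rw [hP]
    intro p hp
    have hpx : 0 ≤ p x := (hP x).mp hx p hp
    rcases lt_or_eq_of_le (hvP p hp) with hpv | hpv
    · have hinf : (P'.inf' hne fun q => q x / q v) ≤ p x / p v :=
        Finset.inf'_le _ (Finset.mem_filter.mpr ⟨hp, hpv⟩)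
      simp only [map_sub, map_smul, smul_eq_mul]
      rw [sub_nonneg]
      calc (P'.inf' hne fun q => q x / q v) * p v ≤ (p x / p v) * p v := by nlinarith
        _ = p x := div_mul_cancel₀ _ (ne_of_gt hpv)
    · simp only [map_sub, map_smul, smul_eq_mul, ← hpv]
      linarith
  · intro x _ t hxt
    apply Finset.le_inf'
    intro p hp
    have h1 : 0 ≤ p (x - t • v) := (hP _).mp hxt p (Finset.mem_filter.mp hp).1
    have hpv : 0 < p v := (Finset.mem_filter.mp hp).2
    simp only [map_sub, map_smul, smul_eq_mul] at h1
    rw [le_div_iff₀ hpv]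
    linarith



-- SECTION 6 : geometry of the star subdivision

structure StarSetup (τ ν : Set (V n)) (v : V n) extends GoodLam τ v where
  poly : IsPolyCone τ
  sc : StronglyConvex τ
  νface : IsFaceOf ν τ
  νeq : ν = {x | ∃ t : ℚ, 0 ≤ t ∧ x = t • v}
  v0 : v ≠ 0

namespace StarSetup

variable {τ ν : Set (V n)} {v : V n}


lemma vν (St : StarSetup τ ν v) : v ∈ ν := by rw [St.νeq]; exact ⟨1, by norm_num, by simp⟩

lemma vτ (St : StarSetup τ ν v) : v ∈ τ := St.νface.subset St.vν

lemma τcs (St : StarSetup τ ν v) : IsConeSet τ := by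
  obtain ⟨S, hS⟩ := St.poly; rw [hS]; exact isConeSet_coneHull _

lemma smul_v_mem_ν (St : StarSetup τ ν v) {t : ℚ} (ht : 0 ≤ t) : t • v ∈ ν := by
  rw [St.νeq]; exact ⟨t, ht, rfl⟩

lemma smul_v_mem_τ_nonneg (St : StarSetup τ ν v) {t : ℚ} (h : t • v ∈ τ) : 0 ≤ t := by
  by_contra hlt
  push_neg at hlt
  have hneg : (-t) • v ∈ τ := St.τcs.smul_mem (-t) (by linarith) v St.vτ
  have : t • v = 0 := St.sc _ h (by rw [← neg_smul]; exact hneg)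
  rcases smul_eq_zero.mp this with h' | h'
  · linarith
  · exact St.v0 h'

lemma fpos (St : StarSetup τ ν v) {ξ : Set (V n)} {m : (V n) →ₗ[ℚ] ℚ} (hm : ∀ x ∈ τ, 0 ≤ m x)
    (hξ : ξ = {x ∈ τ | m x = 0}) (hνξ : ¬ ν ⊆ ξ) : 0 < m v :=
  face_functional_pos St.νface St.vν St.νeq hm hξ hνξ

lemma mem_C_iff (St : StarSetup τ ν v) {ξ : Set (V n)} (hξ : IsFaceOf ξ τ) {x : V n} :
    x ∈ coneHull (ξ ∪ ν) ↔ ∃ y ∈ ξ, ∃ s : ℚ, 0 ≤ s ∧ x = y + s • v := by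
  constructor
  · intro hx
    obtain ⟨a, ha, b, hb, rfl⟩ := coneHull_union_subset_add hx
    rw [coneHull_eq_self (hξ.coneSet St.τcs)] at ha
    rw [coneHull_eq_self (St.νface.coneSet St.τcs)] at hb
    rw [St.νeq] at hb
    obtain ⟨s, hs, rfl⟩ := hb
    exact ⟨a, ha, s, hs, rfl⟩
  · rintro ⟨y, hy, s, hs, rfl⟩
    exact add_mem_coneHull_union (subset_coneHull _ hy)
      (subset_coneHull _ (St.smul_v_mem_ν hs))

lemma C_subset_τ (St : StarSetup τ ν v) {ξ : Set (V n)} (hξ : IsFaceOf ξ τ) : coneHull (ξ ∪ ν) ⊆ τ :=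
  coneHull_min (Set.union_subset hξ.subset St.νface.subset) St.τcs

lemma ν_subset_C {ξ : Set (V n)} : ν ⊆ coneHull (ξ ∪ ν) :=
  Set.subset_union_right.trans (subset_coneHull _)

lemma lam_eq_on_C (St : StarSetup τ ν v) {ξ : Set (V n)} {m : (V n) →ₗ[ℚ] ℚ} (hm : ∀ x ∈ τ, 0 ≤ m x)
    (hξ : ξ = {x ∈ τ | m x = 0}) (hνξ : ¬ ν ⊆ ξ)
    {y : V n} (hy : y ∈ ξ) {s : ℚ} (hs : 0 ≤ s) :
    St.toGoodLam.lam (y + s • v) = s := by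
  have hyτ : y ∈ τ := by rw [hξ] at hy; exact hy.1
  have hmy : m y = 0 := by rw [hξ] at hy; exact hy.2
  have hxτ : y + s • v ∈ τ := St.τcs.add_mem y hyτ _ (St.τcs.smul_mem s hs v St.vτ)
  have hmv : 0 < m v := St.fpos hm hξ hνξ
  have hle : s ≤ St.toGoodLam.lam (y + s • v) := by
    apply St.toGoodLam.lam_ge hxτ
    simpa using hyτ
  have hge : St.toGoodLam.lam (y + s • v) ≤ s := by
    have hmem := St.toGoodLam.lam_mem hxτ
    have h0 := hm _ hmem
    have : m (y + s • v - (St.toGoodLam.lam (y + s • v)) • v)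
        = s * m v - (St.toGoodLam.lam (y + s • v)) * m v := by
      simp [map_add, map_sub, map_smul, smul_eq_mul, hmy]
    rw [this] at h0
    nlinarith
  linarith

lemma sub_lam_eq_on_C (St : StarSetup τ ν v) {ξ : Set (V n)} {m : (V n) →ₗ[ℚ] ℚ} (hm : ∀ x ∈ τ, 0 ≤ m x)
    (hξ : ξ = {x ∈ τ | m x = 0}) (hνξ : ¬ ν ⊆ ξ)
    {y : V n} (hy : y ∈ ξ) {s : ℚ} (hs : 0 ≤ s) :
    (y + s • v) - (St.toGoodLam.lam (y + s • v)) • v = y := by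
  rw [St.lam_eq_on_C hm hξ hνξ hy hs]
  abel

lemma lam_zero_on_face (St : StarSetup τ ν v) {ξ : Set (V n)} {m : (V n) →ₗ[ℚ] ℚ} (hm : ∀ x ∈ τ, 0 ≤ m x)
    (hξ : ξ = {x ∈ τ | m x = 0}) (hνξ : ¬ ν ⊆ ξ) {x : V n} (hx : x ∈ ξ) :
    St.toGoodLam.lam x = 0 := by
  have := St.lam_eq_on_C hm hξ hνξ hx (le_refl (0:ℚ))
  simpa using this

/-- every point of τ is covered by a cone of the star subdivision -/
lemma coverage (St : StarSetup τ ν v) {x : V n} (hx : x ∈ τ) :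
    ∃ ξ, IsFaceOf ξ τ ∧ ¬ ν ⊆ ξ ∧ x - (St.toGoodLam.lam x) • v ∈ ξ := by
  obtain ⟨p, hp, hpeq⟩ := St.toGoodLam.exists_argmin x
  refine ⟨{z ∈ τ | p z = 0}, ⟨p, fun z hz => St.nonneg p hp z hz, rfl⟩, ?_, ?_⟩
  · intro hsub
    have := (hsub St.vν).2
    have := St.pos p hp
    linarith
  · refine ⟨St.toGoodLam.lam_mem hx, ?_⟩
    have hpv : 0 < p v := St.pos p hp
    have : St.toGoodLam.lam x = p x / p v := hpeq
    simp only [map_sub, map_smul, smul_eq_mul, this]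
    field_simp
    ring

lemma mem_C_of_coverage (St : StarSetup τ ν v) {x : V n} (hx : x ∈ τ) {ξ : Set (V n)} (hξ : IsFaceOf ξ τ)
    (hmem : x - (St.toGoodLam.lam x) • v ∈ ξ) : x ∈ coneHull (ξ ∪ ν) :=
  (St.mem_C_iff hξ).mpr ⟨x - (St.toGoodLam.lam x) • v, hmem, St.toGoodLam.lam x,
    St.toGoodLam.lam_nonneg hx, by abel⟩

lemma C_isPolyCone (St : StarSetup τ ν v) {ξ : Set (V n)} (hξ : IsFaceOf ξ τ) : IsPolyCone (coneHull (ξ ∪ ν)) := by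
  classical
  obtain ⟨T, hT⟩ := hξ.isPolyCone St.poly
  refine ⟨insert v T, le_antisymm ?_ ?_⟩
  · refine coneHull_min ?_ (isConeSet_coneHull _)
    rintro z (hz | hz)
    · exact coneHull_mono (by
        intro w hw
        simp only [Finset.coe_insert, Set.mem_insert_iff]
        exact Or.inr hw) (hT ▸ hz)
    · rw [St.νeq] at hz
      obtain ⟨t, ht, rfl⟩ := hz
      exact smul_mem_coneHull ht (subset_coneHull _ (by simp))
  · refine coneHull_mono ?_
    intro w hw
    simp only [Finset.coe_insert, Set.mem_insert_iff] at hw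
    rcases hw with rfl | hw
    · exact Or.inr St.vν
    · exact Or.inl (hT ▸ subset_coneHull _ hw)

/-- the base face is a face of the extended cone -/
lemma face_of_C_base (St : StarSetup τ ν v) {ξ : Set (V n)} {m : (V n) →ₗ[ℚ] ℚ} (hm : ∀ x ∈ τ, 0 ≤ m x)
    (hξ : ξ = {x ∈ τ | m x = 0}) (hνξ : ¬ ν ⊆ ξ) :
    IsFaceOf ξ (coneHull (ξ ∪ ν)) := by
  have hξf : IsFaceOf ξ τ := ⟨m, hm, hξ⟩
  have hmv : 0 < m v := St.fpos hm hξ hνξ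
  refine ⟨m, ?_, ?_⟩
  · intro x hx
    obtain ⟨y, hy, s, hs, rfl⟩ := (St.mem_C_iff hξf).mp hx
    have hmy : m y = 0 := by rw [hξ] at hy; exact hy.2
    simp only [map_add, map_smul, smul_eq_mul, hmy, zero_add]
    positivity
  · ext x
    constructor
    · intro hx
      refine ⟨coneHull_mono Set.subset_union_left (subset_coneHull _ hx), ?_⟩
      rw [hξ] at hx; exact hx.2
    · rintro ⟨hx, hmx⟩
      obtain ⟨y, hy, s, hs, rfl⟩ := (St.mem_C_iff hξf).mp hx
      have hmy : m y = 0 := by rw [hξ] at hy; exact hy.2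
      have : s * m v = 0 := by
        have : m (y + s • v) = s * m v := by
          simp [map_add, map_smul, smul_eq_mul, hmy]
        rw [this] at hmx; exact hmx
      have hs0 : s = 0 := by
        rcases mul_eq_zero.mp this with h | h
        · exact h
        · linarith
      rw [hs0]; simpa using hy

/-- extension is monotone in faces -/
lemma C_face_of_C (St : StarSetup τ ν v) {ξ η : Set (V n)} {mξ mη : (V n) →ₗ[ℚ] ℚ}
    (hmξ : ∀ x ∈ τ, 0 ≤ mξ x) (hξ : ξ = {x ∈ τ | mξ x = 0}) (hνξ : ¬ ν ⊆ ξ)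
    (hmη : ∀ x ∈ τ, 0 ≤ mη x) (hη : η = {x ∈ τ | mη x = 0})
    (hsub : η ⊆ ξ) :
    IsFaceOf (coneHull (η ∪ ν)) (coneHull (ξ ∪ ν)) := by
  have hξf : IsFaceOf ξ τ := ⟨mξ, hmξ, hξ⟩
  have hηf : IsFaceOf η τ := ⟨mη, hmη, hη⟩
  have hmξv : 0 < mξ v := St.fpos hmξ hξ hνξ
  set w : (V n) →ₗ[ℚ] ℚ := mη - ((mη v) / (mξ v)) • mξ with hw
  have hcomp : ∀ y ∈ ξ, ∀ s : ℚ, w (y + s • v) = mη y := by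
    intro y hy s
    have hmξy : mξ y = 0 := by rw [hξ] at hy; exact hy.2
    simp only [hw, LinearMap.sub_apply, LinearMap.smul_apply, smul_eq_mul,
      map_add, map_smul, hmξy]
    field_simp
    ring
  refine ⟨w, ?_, ?_⟩
  · intro x hx
    obtain ⟨y, hy, s, hs, rfl⟩ := (St.mem_C_iff hξf).mp hx
    rw [hcomp y hy s]
    exact hmη y (hξf.subset hy)
  · ext x
    constructor
    · intro hx
      obtain ⟨y, hy, s, hs, rfl⟩ := (St.mem_C_iff hηf).mp hx
      refine ⟨coneHull_mono (Set.union_subset_union_left ν hsub) hx, ?_⟩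
      rw [hcomp y (hsub hy) s]
      rw [hη] at hy; exact hy.2
    · rintro ⟨hx, hwx⟩
      obtain ⟨y, hy, s, hs, rfl⟩ := (St.mem_C_iff hξf).mp hx
      rw [hcomp y hy s] at hwx
      refine (St.mem_C_iff hηf).mpr ⟨y, ?_, s, hs, rfl⟩
      rw [hη]
      exact ⟨hξf.subset hy, hwx⟩

end StarSetup



-- SECTION 7 : the star subdivision is a fan

lemma mem_faces_iff {τ F : Set (V n)} : F ∈ faces τ ↔ IsFaceOf F τ := Iff.rfl

namespace StarSetup

variable {τ ν : Set (V n)} {v : V n}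

lemma mem_star_left (St : StarSetup τ ν v) {F : Set (V n)} (hF : IsFaceOf F τ)
    (h : ¬ ν ⊆ F) : F ∈ starSubdiv (faces τ) ν :=
  Or.inl ⟨hF, h⟩

lemma mem_star_right (St : StarSetup τ ν v) {ξ : Set (V n)} (hξ : IsFaceOf ξ τ)
    (h : ¬ ν ⊆ ξ) : coneHull (ξ ∪ ν) ∈ starSubdiv (faces τ) ν :=
  Or.inr ⟨τ, IsFaceOf.refl τ, St.νface.subset, ξ, hξ, h, rfl⟩

lemma mem_star_elim (St : StarSetup τ ν v) {σ' : Set (V n)}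
    (h : σ' ∈ starSubdiv (faces τ) ν) :
    (IsFaceOf σ' τ ∧ ¬ ν ⊆ σ') ∨ ∃ ξ, IsFaceOf ξ τ ∧ ¬ ν ⊆ ξ ∧ σ' = coneHull (ξ ∪ ν) := by
  rcases h with ⟨hσ, hνσ⟩ | ⟨σ, hσ, hνσ, ξ, hξσ, hνξ, rfl⟩
  · exact Or.inl ⟨hσ, hνσ⟩
  · exact Or.inr ⟨ξ, hξσ.trans hσ St.poly, hνξ, rfl⟩

lemma star_subset_τ (St : StarSetup τ ν v) {σ' : Set (V n)}
    (h : σ' ∈ starSubdiv (faces τ) ν) : σ' ⊆ τ := by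
  rcases St.mem_star_elim h with ⟨hσ, _⟩ | ⟨ξ, hξ, _, rfl⟩
  · exact hσ.subset
  · exact St.C_subset_τ hξ

lemma ray_eq_ν (St : StarSetup τ ν v) {ρ : Set (V n)} (hρ : IsFaceOf ρ τ)
    (hdim : coneDim ρ = 1) (hvρ : v ∈ ρ) : ρ = ν := by
  rw [ray_eq_smul St.sc St.τcs hρ hdim hvρ St.v0, ← St.νeq]

lemma C_ray_eq_ν (St : StarSetup τ ν v) {ξ : Set (V n)} (hξ : IsFaceOf ξ τ)
    (hdim : coneDim (coneHull (ξ ∪ ν)) = 1) : coneHull (ξ ∪ ν) = ν := by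
  have hvC : v ∈ coneHull (ξ ∪ ν) := ν_subset_C St.vν
  have hspan := span_eq_span_singleton_of_coneDim_one hdim hvC St.v0
  apply le_antisymm
  · intro x hx
    have : x ∈ Submodule.span ℚ ({v} : Set (V n)) := by
      rw [← hspan]; exact Submodule.subset_span hx
    obtain ⟨t, rfl⟩ := Submodule.mem_span_singleton.mp this
    exact St.smul_v_mem_ν (St.smul_v_mem_τ_nonneg (St.C_subset_τ hξ hx))
  · exact ν_subset_C

/-- faces of extended cones belong to the star subdivision -/
lemma face_of_C_mem_star (St : StarSetup τ ν v) {ξ G : Set (V n)} (hξ : IsFaceOf ξ τ)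
    (hνξ : ¬ ν ⊆ ξ) (hG : IsFaceOf G (coneHull (ξ ∪ ν))) :
    G ∈ starSubdiv (faces τ) ν := by
  obtain ⟨w, hw, hGdef⟩ := hG
  have hξsubC : ξ ⊆ coneHull (ξ ∪ ν) :=
    Set.subset_union_left.trans (subset_coneHull _)
  have hwv : 0 ≤ w v := hw v (ν_subset_C St.vν)
  rcases lt_or_eq_of_le hwv with hwv | hwv
  · -- w v > 0 : G is a face of ξ not containing ν
    have hGη : G = {x ∈ ξ | w x = 0} := by
      rw [hGdef]
      ext x
      constructor
      · rintro ⟨hxC, hwx⟩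
        obtain ⟨y, hy, s, hs, rfl⟩ := (St.mem_C_iff hξ).mp hxC
        have hwy : 0 ≤ w y := hw y (hξsubC hy)
        have hcalc : w (y + s • v) = w y + s * w v := by
          simp [map_add, map_smul, smul_eq_mul]
        have hs0 : s = 0 := by nlinarith
        rw [hs0]
        constructor
        · simpa using hy
        · simpa [hs0] using hwx
      · rintro ⟨hxξ, hwx⟩
        exact ⟨hξsubC hxξ, hwx⟩
    have hGξ : IsFaceOf G ξ := ⟨w, fun x hx => hw x (hξsubC hx), hGη⟩
    have hGτ : IsFaceOf G τ := hGξ.trans hξ St.poly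
    refine St.mem_star_left hGτ ?_
    intro hsub
    have hvG := hsub St.vν
    rw [hGη] at hvG
    have := hvG.2
    linarith
  · -- w v = 0 : G is the extension of a face of ξ
    set η := {x ∈ ξ | w x = 0} with hη
    have hηξ : IsFaceOf η ξ := ⟨w, fun x hx => hw x (hξsubC hx), rfl⟩
    have hητ : IsFaceOf η τ := hηξ.trans hξ St.poly
    have hνη : ¬ ν ⊆ η := fun hsub => hνξ (hsub.trans (fun x hx => hx.1))
    have hGC : G = coneHull (η ∪ ν) := by
      apply le_antisymm
      · intro x hx
        rw [hGdef] at hx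
        obtain ⟨hxC, hwx⟩ := hx
        obtain ⟨y, hy, s, hs, rfl⟩ := (St.mem_C_iff hξ).mp hxC
        have hcalc : w (y + s • v) = w y := by
          simp [map_add, map_smul, smul_eq_mul, ← hwv]
        refine (St.mem_C_iff hητ).mpr ⟨y, ⟨hy, ?_⟩, s, hs, rfl⟩
        rw [← hcalc, hwx]
      · have hGcs : IsConeSet G :=
          IsFaceOf.coneSet ⟨w, hw, hGdef⟩ (isConeSet_coneHull _)
        refine coneHull_min (Set.union_subset ?_ ?_) hGcs
        · intro x hx
          rw [hGdef]
          exact ⟨hξsubC hx.1, hx.2⟩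
        · intro z hz
          rw [hGdef]
          refine ⟨ν_subset_C hz, ?_⟩
          rw [St.νeq] at hz
          obtain ⟨s, hs, rfl⟩ := hz
          simp [map_smul, smul_eq_mul, ← hwv]
      
    rw [hGC]
    exact St.mem_star_right hητ hνη

lemma inter_face_C (St : StarSetup τ ν v) {F ξ : Set (V n)}
    {mF : (V n) →ₗ[ℚ] ℚ} (hmF : ∀ x ∈ τ, 0 ≤ mF x) (hFdef : F = {x ∈ τ | mF x = 0})
    (hνF : ¬ ν ⊆ F) (hξ : IsFaceOf ξ τ) :
    F ∩ coneHull (ξ ∪ ν) = F ∩ ξ := by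
  have hF : IsFaceOf F τ := ⟨mF, hmF, hFdef⟩
  have hmFv : 0 < mF v := St.fpos hmF hFdef hνF
  apply le_antisymm
  · rintro x ⟨hxF, hxC⟩
    obtain ⟨y, hy, s, hs, rfl⟩ := (St.mem_C_iff hξ).mp hxC
    have hmFx : mF (y + s • v) = 0 := by
      rw [hFdef] at hxF; exact hxF.2
    have hmFy : 0 ≤ mF y := hmF y (hξ.subset hy)
    have hcalc : mF (y + s • v) = mF y + s * mF v := by
      simp [map_add, map_smul, smul_eq_mul]
    have hs0 : s = 0 := by nlinarith
    rw [hs0]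
    refine ⟨by simpa [hs0] using hxF, by simpa using hy⟩
  · rintro x ⟨hxF, hxξ⟩
    exact ⟨hxF, Set.subset_union_left.trans (subset_coneHull _) hxξ⟩

lemma inter_C_C (St : StarSetup τ ν v) {ξ ξ' : Set (V n)}
    {mξ : (V n) →ₗ[ℚ] ℚ} (hmξ : ∀ x ∈ τ, 0 ≤ mξ x) (hξdef : ξ = {x ∈ τ | mξ x = 0})
    (hνξ : ¬ ν ⊆ ξ)
    {mξ' : (V n) →ₗ[ℚ] ℚ} (hmξ' : ∀ x ∈ τ, 0 ≤ mξ' x) (hξdef' : ξ' = {x ∈ τ | mξ' x = 0})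
    (hνξ' : ¬ ν ⊆ ξ') :
    coneHull (ξ ∪ ν) ∩ coneHull (ξ' ∪ ν) = coneHull ((ξ ∩ ξ') ∪ ν) := by
  have hξf : IsFaceOf ξ τ := ⟨mξ, hmξ, hξdef⟩
  have hξf' : IsFaceOf ξ' τ := ⟨mξ', hmξ', hξdef'⟩
  have hint : IsFaceOf (ξ ∩ ξ') τ := IsFaceOf.inter_isFace hξf hξf'
  apply le_antisymm
  · rintro x ⟨hx1, hx2⟩
    obtain ⟨y, hy, s, hs, rfl⟩ := (St.mem_C_iff hξf).mp hx1
    obtain ⟨y', hy', s', hs', heq⟩ := (St.mem_C_iff hξf').mp hx2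
    have h1 : St.toGoodLam.lam (y + s • v) = s := St.lam_eq_on_C hmξ hξdef hνξ hy hs
    have h2 : St.toGoodLam.lam (y + s • v) = s' := by
      rw [heq]
      exact St.lam_eq_on_C hmξ' hξdef' hνξ' hy' hs'
    have hss : s = s' := by rw [← h1, h2]
    have hyy : y = y' := by
      have : y + s • v = y' + s • v := by rw [heq, hss]
      exact add_right_cancel this
    refine (St.mem_C_iff hint).mpr ⟨y, ⟨hy, hyy ▸ hy'⟩, s, hs, rfl⟩
  · exact Set.subset_inter
      (coneHull_mono (Set.union_subset_union_left ν Set.inter_subset_left))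
      (coneHull_mono (Set.union_subset_union_left ν Set.inter_subset_right))

/-- the star subdivision is a fan -/
lemma star_isFan (St : StarSetup τ ν v) : IsFan (starSubdiv (faces τ) ν) := by
  refine ⟨?_, ?_, ?_, ?_⟩
  · -- finiteness
    have hsub : starSubdiv (faces τ) ν ⊆
        faces τ ∪ (fun ξ => coneHull (ξ ∪ ν)) '' faces τ := by
      intro σ' h
      rcases St.mem_star_elim h with ⟨hσ, _⟩ | ⟨ξ, hξ, _, rfl⟩
      · exact Or.inl hσ
      · exact Or.inr ⟨ξ, hξ, rfl⟩
    exact Set.Finite.subset ((faces_finite St.poly).union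
      ((faces_finite St.poly).image _)) hsub
  · -- polyhedral and strongly convex
    intro σ' h
    constructor
    · rcases St.mem_star_elim h with ⟨hσ, _⟩ | ⟨ξ, hξ, _, rfl⟩
      · exact hσ.isPolyCone St.poly
      · exact St.C_isPolyCone hξ
    · intro x hx hneg
      exact St.sc x (St.star_subset_τ h hx) (St.star_subset_τ h hneg)
  · -- closed under faces
    intro σ' h G hG
    rcases St.mem_star_elim h with ⟨hσ, hνσ⟩ | ⟨ξ, hξ, hνξ, rfl⟩
    · refine St.mem_star_left (hG.trans hσ St.poly) ?_
      intro hsub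
      exact hνσ (hsub.trans hG.subset)
    · exact St.face_of_C_mem_star hξ hνξ hG
  · -- intersections
    intro σ h σ' h'
    rcases St.mem_star_elim h with ⟨hσ, hνσ⟩ | ⟨ξ, hξ, hνξ, rfl⟩ <;>
      rcases St.mem_star_elim h' with ⟨hσ', hνσ'⟩ | ⟨ξ', hξ', hνξ', rfl⟩
    · exact ⟨IsFaceOf.inter_left hσ hσ',
        by rw [Set.inter_comm]; exact IsFaceOf.inter_left hσ' hσ⟩
    · obtain ⟨mF, hmF, hFdef⟩ := id hσ
      have heq : σ ∩ coneHull (ξ' ∪ ν) = σ ∩ ξ' := St.inter_face_C hmF hFdef hνσ hξ'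
      obtain ⟨mξ', hmξ', hξdef'⟩ := id hξ'
      constructor
      · rw [heq]
        exact IsFaceOf.inter_left hσ hξ'
      · rw [heq]
        have h1 : IsFaceOf (ξ' ∩ σ) ξ' := IsFaceOf.inter_left hξ' hσ
        have h2 : IsFaceOf ξ' (coneHull (ξ' ∪ ν)) := St.face_of_C_base hmξ' hξdef' hνξ'
        rw [Set.inter_comm]
        exact h1.trans h2 (St.C_isPolyCone hξ')
    · obtain ⟨mF, hmF, hFdef⟩ := id hσ'
      obtain ⟨mξ, hmξ, hξdef⟩ := id hξ
      have heq : coneHull (ξ ∪ ν) ∩ σ' = σ' ∩ ξ := by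
        rw [Set.inter_comm]; exact St.inter_face_C hmF hFdef hνσ' hξ
      constructor
      · rw [heq]
        have h1 : IsFaceOf (ξ ∩ σ') ξ := IsFaceOf.inter_left hξ hσ'
        have h2 : IsFaceOf ξ (coneHull (ξ ∪ ν)) := St.face_of_C_base hmξ hξdef hνξ
        rw [Set.inter_comm]
        exact h1.trans h2 (St.C_isPolyCone hξ)
      · rw [heq]
        exact IsFaceOf.inter_left hσ' hξ
    · obtain ⟨mξ, hmξ, hξdef⟩ := id hξ
      obtain ⟨mξ', hmξ', hξdef'⟩ := id hξ'
      have heq := St.inter_C_C hmξ hξdef hνξ hmξ' hξdef' hνξ'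
      obtain ⟨mη, hmη, hηdef⟩ :=
        id (IsFaceOf.inter_isFace (⟨mξ, hmξ, hξdef⟩ : IsFaceOf ξ τ) ⟨mξ', hmξ', hξdef'⟩)
      rw [heq]
      have hνint : ¬ ν ⊆ ξ ∩ ξ' := fun hsub => hνξ (hsub.trans Set.inter_subset_left)
      constructor
      · exact St.C_face_of_C hmξ hξdef hνξ hmη hηdef Set.inter_subset_left
      · exact St.C_face_of_C hmξ' hξdef' hνξ' hmη hηdef Set.inter_subset_right

end StarSetup


-- SECTION 8 : support, argmin uniformity

namespace StarSetup

variable {τ ν : Set (V n)} {v : V n}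

lemma support_faces (St : StarSetup τ ν v) : support (faces τ) = τ := by
  apply le_antisymm
  · rintro x ⟨F, hF, hx⟩
    exact (mem_faces_iff.mp hF).subset hx
  · intro x hx
    exact ⟨τ, IsFaceOf.refl τ, hx⟩

lemma support_star (St : StarSetup τ ν v) : support (starSubdiv (faces τ) ν) = τ := by
  apply le_antisymm
  · rintro x ⟨σ', hσ', hx⟩
    exact St.star_subset_τ hσ' hx
  · intro x hx
    obtain ⟨ξ, hξ, hνξ, hmem⟩ := St.coverage hx
    exact ⟨coneHull (ξ ∪ ν), St.mem_star_right hξ hνξ, St.mem_C_of_coverage hx hξ hmem⟩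

/-- A linear function below a finite min which agrees with it on a convex set
must agree with a single branch of the min on the whole convex set. -/
lemma exists_uniform_argmin (St : StarSetup τ ν v) {t : Set (V n)} (htτ : t ⊆ τ)
    (hconv : Convex ℚ t) {m : (V n) →ₗ[ℚ] ℚ}
    (hm : ∀ x ∈ t, -(St.toGoodLam.lam x) = m x) :
    ∃ p ∈ St.P', ∀ x ∈ t, St.toGoodLam.lam x = p x / p v := by
  classical
  by_contra hcon
  push_neg at hcon
  choose! g hg1 hg2 using hcon
  have hstrict : ∀ p ∈ St.P', St.toGoodLam.lam (g p) < p (g p) / p v := fun p hp =>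
    lt_of_le_of_ne (St.toGoodLam.lam_le hp (g p)) (hg2 p hp)
  set k : ℚ := (St.P'.card : ℚ) with hk
  have hk0 : 0 < k := by
    have := Finset.card_pos.mpr St.hne
    positivity
  set z : V n := ∑ p ∈ St.P', k⁻¹ • g p with hz
  have hzt : z ∈ t := by
    refine hconv.sum_mem (fun p _ => by positivity) ?_ (fun p hp => hg1 p hp)
    rw [Finset.sum_const, nsmul_eq_mul]
    field_simp
    exact hk.symm
  have hzτ : z ∈ τ := htτ hzt
  have hlamz : St.toGoodLam.lam z = ∑ p ∈ St.P', k⁻¹ * St.toGoodLam.lam (g p) := by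
    have h1 : -(St.toGoodLam.lam z) = m z := hm z hzt
    have h2 : m z = ∑ p ∈ St.P', k⁻¹ * m (g p) := by
      rw [hz, map_sum]
      exact Finset.sum_congr rfl (fun p _ => by simp [map_smul, smul_eq_mul])
    have h3 : ∀ p ∈ St.P', m (g p) = -(St.toGoodLam.lam (g p)) :=
      fun p hp => (hm (g p) (hg1 p hp)).symm
    have h4 : m z = -∑ p ∈ St.P', k⁻¹ * St.toGoodLam.lam (g p) := by
      rw [h2, ← Finset.sum_neg_distrib]
      exact Finset.sum_congr rfl (fun p hp => by rw [h3 p hp]; ring)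
    rw [← neg_neg (St.toGoodLam.lam z), h1, h4, neg_neg]
  obtain ⟨q, hq, hqz⟩ := St.toGoodLam.exists_argmin z
  have hqv : 0 < q v := St.pos q hq
  have hqz2 : q z / q v = ∑ p ∈ St.P', k⁻¹ * (q (g p) / q v) := by
    rw [hz, map_sum, Finset.sum_div]
    refine Finset.sum_congr rfl (fun p _ => ?_)
    rw [map_smul, smul_eq_mul, mul_div_assoc]
  have hlt : ∑ p ∈ St.P', k⁻¹ * St.toGoodLam.lam (g p)
      < ∑ p ∈ St.P', k⁻¹ * (q (g p) / q v) := by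
    refine Finset.sum_lt_sum (fun p hp => ?_) ⟨q, hq, ?_⟩
    · refine mul_le_mul_of_nonneg_left ?_ (by positivity)
      exact St.toGoodLam.lam_le hq (g p)
    · exact mul_lt_mul_of_pos_left (hstrict q hq) (by positivity)
  rw [← hlamz, ← hqz2, ← hqz] at hlt
  exact lt_irrefl _ hlt

end StarSetup


/-- If an affine fan quadruple admits a sorting function which is strictly
negative on a ray `ν ∈ C`, then the star subdivision at `ν`, with the induced quadruple,
is a convex subdivision. -/
theorem starSubdiv_convex_of_strict_sorting {n : ℕ} (τ ν : Set (V n))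
    (B C H : Set (Set (V n)))
    (hτ : IsPolyCone τ) (hsc : StronglyConvex τ)
    (hQ : IsQuadData (faces τ) B C H) (hν : ν ∈ C)
    (ρ : (V n) →ₗ[ℚ] ℚ) (hρ : IsSortingOn τ B C H ρ)
    (hstrict : ∀ x ∈ ν, x ≠ 0 → ρ x < 0) :
    IsConvexSubdiv (starSubdiv (faces τ) ν) (faces τ) B C H := by
  classical
  obtain ⟨hνfaces, hνdim⟩ := hQ.2.1 hν
  have hνf : IsFaceOf ν τ := hνfaces
  obtain ⟨v, hvν, hv0⟩ := exists_ne_zero_of_coneDim_one hνdim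
  have hτcs : IsConeSet τ := by obtain ⟨S, rfl⟩ := hτ; exact isConeSet_coneHull _
  have hνeq : ν = {x | ∃ t : ℚ, 0 ≤ t ∧ x = t • v} :=
    ray_eq_smul hsc hτcs hνf hνdim hvν hv0
  obtain ⟨L⟩ := exists_goodLam hτ hsc (hνf.subset hvν) hv0
  have St : StarSetup τ ν v := ⟨L, hτ, hsc, hνf, hνeq, hv0⟩
  refine ⟨⟨St.star_isFan, St.support_star.trans St.support_faces.symm, ?_⟩,
    fun x => -(St.toGoodLam.lam x), ?_, ?_, ?_, ?_⟩
  · -- every cone of the subdivision is contained in τ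
    intro σ' hσ'
    exact ⟨τ, mem_faces_iff.mpr (IsFaceOf.refl τ), St.star_subset_τ hσ'⟩
  · -- IsGoodFor
    intro F hF
    have hFf : IsFaceOf F τ := hF
    refine ⟨⟨convex_of_coneSet (hFf.coneSet St.τcs), ?_⟩, ?_, ?_⟩
    · -- convexity inequality
      intro x _ y _ a b ha hb _
      simp only [smul_eq_mul]
      have := St.toGoodLam.lam_concave x y a b ha hb
      linarith
    · -- linearity on cones of the subdivision
      intro σ' hσ' _
      rcases St.mem_star_elim hσ' with ⟨hG, hνG⟩ | ⟨ξ, hξ, hνξ, rfl⟩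
      · refine ⟨0, fun x hx => ?_⟩
        obtain ⟨mG, hmG, hGdef⟩ := id hG
        show -(St.toGoodLam.lam x) = (0 : (V n) →ₗ[ℚ] ℚ) x
        rw [St.lam_zero_on_face hmG hGdef hνG hx]
        simp
      · obtain ⟨mξ, hmξ, hξdef⟩ := id hξ
        have hmv : 0 < mξ v := St.fpos hmξ hξdef hνξ
        refine ⟨-((mξ v)⁻¹ • mξ), fun x hx => ?_⟩
        obtain ⟨y, hy, s, hs, rfl⟩ := (St.mem_C_iff hξ).mp hx
        have hlam : St.toGoodLam.lam (y + s • v) = s := St.lam_eq_on_C hmξ hξdef hνξ hy hs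
        have hmy : mξ y = 0 := by rw [hξdef] at hy; exact hy.2
        have hval : (-((mξ v)⁻¹ • mξ)) (y + s • v) = -s := by
          simp only [LinearMap.neg_apply, LinearMap.smul_apply, map_add, map_smul,
            smul_eq_mul, hmy]
          field_simp
          ring
        show -(St.toGoodLam.lam (y + s • v)) = (-((mξ v)⁻¹ • mξ)) (y + s • v)
        rw [hlam, hval]
    · -- maximality of the linearity domains
      intro m t htF hconv hlin
      by_cases hνF : ν ⊆ F
      · obtain ⟨p, hp, hall⟩ := St.exists_uniform_argmin (htF.trans hFf.subset) hconv
          (m := m) (fun x hx => hlin x hx)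
        obtain ⟨mF, hmF, hFdef⟩ := id hFf
        have hvF : v ∈ F := hνF St.vν
        have hmFv : mF v = 0 := by rw [hFdef] at hvF; exact hvF.2
        have hζf : IsFaceOf {z ∈ τ | p z = 0} τ := ⟨p, fun z hz => St.nonneg p hp z hz, rfl⟩
        have hξf : IsFaceOf ({z ∈ τ | p z = 0} ∩ F) τ := IsFaceOf.inter_isFace hζf hFf
        have hνξ : ¬ ν ⊆ {z ∈ τ | p z = 0} ∩ F := by
          intro hsub
          have h1 := (hsub St.vν).1.2
          have h2 := St.pos p hp
          linarith
        refine ⟨coneHull (({z ∈ τ | p z = 0} ∩ F) ∪ ν), St.mem_star_right hξf hνξ, ?_, ?_⟩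
        · exact coneHull_min (Set.union_subset Set.inter_subset_right hνF)
            (hFf.coneSet St.τcs)
        · intro x hx
          have hxτ : x ∈ τ := hFf.subset (htF hx)
          have hxF : x ∈ F := htF hx
          have hmFx : mF x = 0 := by rw [hFdef] at hxF; exact hxF.2
          have hyτ : x - St.toGoodLam.lam x • v ∈ τ := St.toGoodLam.lam_mem hxτ
          have hpv : 0 < p v := St.pos p hp
          have hpy : p (x - St.toGoodLam.lam x • v) = 0 := by
            rw [map_sub, map_smul, smul_eq_mul, hall x hx]
            field_simp
            ring
          have hmFy : mF (x - St.toGoodLam.lam x • v) = 0 := by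
            rw [map_sub, map_smul, smul_eq_mul, hmFx, hmFv]
            ring
          refine (St.mem_C_iff hξf).mpr ⟨x - St.toGoodLam.lam x • v,
            ⟨⟨hyτ, hpy⟩, ?_⟩, St.toGoodLam.lam x, St.toGoodLam.lam_nonneg hxτ, by abel⟩
          rw [hFdef]
          exact ⟨hyτ, hmFy⟩
      · exact ⟨F, St.mem_star_left hFf hνF, subset_rfl, htF⟩
  · -- nonnegative on rays of B
    intro μ hμB x hx
    obtain ⟨hμfaces, hμdim⟩ := hQ.1 hμB
    have hμf : IsFaceOf μ τ := hμfaces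
    have hνμ : ¬ ν ⊆ μ := by
      intro hsub
      have heqν : μ = ν := St.ray_eq_ν hμf hμdim (hsub St.vν)
      rw [heqν] at hμB
      exact (Set.disjoint_left.mp hQ.2.2.2.1 hμB) hν
    obtain ⟨mμ, hmμ, hμdef⟩ := id hμf
    have := St.lam_zero_on_face hmμ hμdef hνμ hx
    simp [this]
  · -- nonpositive on rays of C
    intro μ hμC x hx
    obtain ⟨hμfaces, _⟩ := hQ.2.1 hμC
    have hxτ : x ∈ τ := (mem_faces_iff.mp hμfaces).subset hx
    have := St.toGoodLam.lam_nonneg hxτ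
    simp only [neg_nonpos]
    linarith
  · -- zero on the remaining rays
    intro μ hμ _ hC _ x hx
    obtain ⟨hμmem, hμdim⟩ := hμ
    rcases St.mem_star_elim hμmem with ⟨hμf, hνμ⟩ | ⟨ξ, hξ, hνξ, rfl⟩
    · obtain ⟨mμ, hmμ, hμdef⟩ := id hμf
      simp [St.lam_zero_on_face hmμ hμdef hνμ hx]
    · exfalso
      rw [St.C_ray_eq_ν hξ hμdim] at hC
      exact hC hν


end ToricPaper
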